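/- Let X and Y be bounded random variables on a probability space, with X measurable with respect to a σ-algebra 𝓕_U and Y measurable with respect to 𝓕_V, and suppose that for all events A ∈ 𝓕_U, B ∈ 𝓕_V one has |P[A ∩ B] - P[A]P[B]| ≤ φ. Then |Cov[X,Y]| ≤ 4 ‖X‖_∞ ‖Y‖_∞ φ, where ‖·‖_∞ denotes the essential supremum. -/

import Mathlib

open MeasureTheory Set

/-- Covariance estimate from the α-mixing condition: if `X` is `𝓖₁`-measurable,
`Y` is `𝓖₂`-measurable, both essentially bounded, and
`|P[A ∩ B] - P[A]P[B]| ≤ φ` for all `A ∈ 𝓖₁`, `B ∈ 𝓖₂`, then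
`|Cov[X,Y]| ≤ 4 ‖X‖_∞ ‖Y‖_∞ φ`. -/
theorem stmt13 {Ω : Type*} [m : MeasurableSpace Ω] (P : Measure Ω)
    [IsProbabilityMeasure P]
    (𝓖₁ 𝓖₂ : MeasurableSpace Ω) (h₁ : 𝓖₁ ≤ m) (h₂ : 𝓖₂ ≤ m)
    (X Y : Ω → ℝ) (hX : Measurable[𝓖₁] X) (hY : Measurable[𝓖₂] Y)
    (MX MY : ℝ) (hMX : ∀ᵐ ω ∂P, |X ω| ≤ MX) (hMY : ∀ᵐ ω ∂P, |Y ω| ≤ MY)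
    (φ : ℝ)
    (hmix : ∀ A B : Set Ω, MeasurableSet[𝓖₁] A → MeasurableSet[𝓖₂] B →
      |(P (A ∩ B)).toReal - (P A).toReal * (P B).toReal| ≤ φ) :
    |(∫ ω, X ω * Y ω ∂P) - (∫ ω, X ω ∂P) * ∫ ω, Y ω ∂P| ≤ 4 * MX * MY * φ := by
  have hX' : Measurable[m] X := hX.mono h₁ le_rfl
  have hY' : Measurable[m] Y := hY.mono h₂ le_rfl
  have hA𝓖 : ∀ s : ℝ, MeasurableSet[𝓖₁] {ω | s < X ω} := fun s => hX measurableSet_Ioi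
  have hB𝓖 : ∀ t : ℝ, MeasurableSet[𝓖₂] {ω | t < Y ω} := fun t => hY measurableSet_Ioi
  have hAm : ∀ s : ℝ, MeasurableSet[m] {ω | s < X ω} := fun s => h₁ _ (hA𝓖 s)
  have hBm : ∀ t : ℝ, MeasurableSet[m] {ω | t < Y ω} := fun t => h₂ _ (hB𝓖 t)
  have hmix' : ∀ s t : ℝ,
      |(P ({ω | s < X ω} ∩ {ω | t < Y ω})).toReal
        - (P {ω | s < X ω}).toReal * (P {ω | t < Y ω}).toReal| ≤ φ :=
    fun s t => hmix _ _ (hA𝓖 s) (hB𝓖 t)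
  have hφ0 : 0 ≤ φ := by
    have := hmix univ univ MeasurableSet.univ MeasurableSet.univ
    simpa using (abs_nonneg _).trans this
  clear hmix hX hY hA𝓖 hB𝓖 h₁ h₂
  clear 𝓖₁ 𝓖₂
  have hMX0 : 0 ≤ MX := by
    obtain ⟨ω, hω⟩ := hMX.exists
    exact (abs_nonneg _).trans hω
  have hMY0 : 0 ≤ MY := by
    obtain ⟨ω, hω⟩ := hMY.exists
    exact (abs_nonneg _).trans hω
  set ν₁ : Measure ℝ := volume.restrict (Ioc (-MX) MX) with hν₁def
  set ν₂ : Measure ℝ := volume.restrict (Ioc (-MY) MY) with hν₂def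
  have hν₁ : IsFiniteMeasure ν₁ := by
    constructor
    rw [hν₁def, Measure.restrict_apply_univ]
    simp [Real.volume_Ioc]
  have hν₂ : IsFiniteMeasure ν₂ := by
    constructor
    rw [hν₂def, Measure.restrict_apply_univ]
    simp [Real.volume_Ioc]
  set A : ℝ → Set Ω := fun s => {ω | s < X ω} with hAdef
  set B : ℝ → Set Ω := fun t => {ω | t < Y ω} with hBdef
  -- the joint indicator
  set H : (ℝ × ℝ) × Ω → ℝ := fun q => if q.1.1 < X q.2 ∧ q.1.2 < Y q.2 then 1 else 0
    with hHdef
  have hSmeas : MeasurableSet {q : (ℝ × ℝ) × Ω | q.1.1 < X q.2 ∧ q.1.2 < Y q.2} := by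
    apply MeasurableSet.inter
    · exact measurableSet_lt (measurable_fst.fst) (hX'.comp measurable_snd)
    · exact measurableSet_lt (measurable_fst.snd) (hY'.comp measurable_snd)
  have hHmeas : Measurable H := by
    rw [hHdef]
    exact Measurable.ite hSmeas measurable_const measurable_const
  have hHbound : ∀ q, ‖H q‖ ≤ 1 := by
    intro q
    rw [hHdef]
    by_cases h : q.1.1 < X q.2 ∧ q.1.2 < Y q.2 <;> simp [h]
  -- integrability of H on the product
  have hHint : Integrable H ((ν₁.prod ν₂).prod P) :=
    (integrable_const (1 : ℝ)).mono' hHmeas.aestronglyMeasurable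
      (Filter.Eventually.of_forall hHbound)
  have hHint' : Integrable (fun q : Ω × (ℝ × ℝ) => H (q.2, q.1)) (P.prod (ν₁.prod ν₂)) :=
    ((integrable_const (1 : ℝ)).mono'
      ((hHmeas.comp (measurable_snd.prodMk measurable_fst)).aestronglyMeasurable)
      (Filter.Eventually.of_forall fun q => hHbound _))
  -- layer cake: pointwise
  have layer : ∀ (M x : ℝ), |x| ≤ M →
      ∫ s, (if s < x then (1:ℝ) else 0) ∂(volume.restrict (Ioc (-M) M)) = x + M := by
    intro M x hx
    rw [abs_le] at hx
    have h1 : (fun s => if s < x then (1:ℝ) else 0) = (Iio x).indicator (fun _ => (1:ℝ)) := by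
      funext s
      simp [indicator_apply, mem_Iio]
    rw [h1, integral_indicator_const _ measurableSet_Iio, measureReal_def,
      Measure.restrict_apply measurableSet_Iio]
    have h2 : Iio x ∩ Ioc (-M) M = Ioo (-M) x := by
      ext s
      simp only [mem_inter_iff, mem_Iio, mem_Ioc, mem_Ioo]
      constructor
      · rintro ⟨h, h', h''⟩; exact ⟨h', h⟩
      · rintro ⟨h, h'⟩; exact ⟨h', h, by linarith [hx.2]⟩
    rw [h2, Real.volume_Ioo, smul_eq_mul, mul_one, ENNReal.toReal_ofReal (by linarith [hx.1])]
    ring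
  -- the mixing bound as a function of (s, t)
  set κ : ℝ × ℝ → ℝ := fun p => (P (A p.1 ∩ B p.2)).toReal with hκdef
  set κ' : ℝ × ℝ → ℝ := fun p => (P (A p.1)).toReal * (P (B p.2)).toReal with hκ'def
  -- inner integrals over Ω
  have hinner : ∀ p : ℝ × ℝ, ∫ ω, H (p, ω) ∂P = κ p := by
    intro p
    have h1 : (fun ω => H (p, ω)) = (A p.1 ∩ B p.2).indicator (fun _ => (1:ℝ)) := by
      funext ω
      rw [hHdef]
      simp only [indicator_apply, mem_inter_iff, hAdef, hBdef, mem_setOf_eq]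
    rw [h1, integral_indicator_const _ ((hAm p.1).inter (hBm p.2)), smul_eq_mul, mul_one, measureReal_def, hκdef]
  have hinnerX : ∀ s : ℝ, ∫ ω, (if s < X ω then (1:ℝ) else 0) ∂P = (P (A s)).toReal := by
    intro s
    have h1 : (fun ω => if s < X ω then (1:ℝ) else 0) = (A s).indicator (fun _ => (1:ℝ)) := by
      funext ω
      simp [indicator_apply, hAdef]
    rw [h1, integral_indicator_const _ (hAm s), smul_eq_mul, mul_one, measureReal_def]
  have hinnerY : ∀ t : ℝ, ∫ ω, (if t < Y ω then (1:ℝ) else 0) ∂P = (P (B t)).toReal := by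
    intro t
    have h1 : (fun ω => if t < Y ω then (1:ℝ) else 0) = (B t).indicator (fun _ => (1:ℝ)) := by
      funext ω
      simp [indicator_apply, hBdef]
    rw [h1, integral_indicator_const _ (hBm t), smul_eq_mul, mul_one, measureReal_def]
  -- pointwise product splitting of H
  have hHsplit : ∀ (p : ℝ × ℝ) (ω : Ω),
      H (p, ω) = (if p.1 < X ω then (1:ℝ) else 0) * (if p.2 < Y ω then (1:ℝ) else 0) := by
    intro p ω
    rw [hHdef]
    by_cases h1 : p.1 < X ω <;> by_cases h2 : p.2 < Y ω <;> simp [h1, h2]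
  -- Step 1: E[(X+MX)(Y+MY)] = ∫ κ
  have step1 : ∫ ω, (X ω + MX) * (Y ω + MY) ∂P = ∫ p, κ p ∂(ν₁.prod ν₂) := by
    have hae : ∀ᵐ ω ∂P, (X ω + MX) * (Y ω + MY) = ∫ p, H (p, ω) ∂(ν₁.prod ν₂) := by
      filter_upwards [hMX, hMY] with ω hx hy
      have h1 : ∫ p, H (p, ω) ∂(ν₁.prod ν₂)
          = (∫ s, (if s < X ω then (1:ℝ) else 0) ∂ν₁)
            * ∫ t, (if t < Y ω then (1:ℝ) else 0) ∂ν₂ := by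
        rw [← integral_prod_mul]
        exact integral_congr_ae (Filter.Eventually.of_forall fun p => hHsplit p ω)
      rw [h1, layer MX (X ω) hx, layer MY (Y ω) hy]
    rw [integral_congr_ae hae]
    rw [show (fun ω => ∫ p, H (p, ω) ∂(ν₁.prod ν₂))
        = fun ω => ∫ p, (fun ω p => H (p, ω)) ω p ∂(ν₁.prod ν₂) from rfl]
    rw [integral_integral_swap hHint']
    exact integral_congr_ae (Filter.Eventually.of_forall fun p => hinner p)
  -- Step 2: E[X+MX] = ∫ s, P(A s)
  have step2 : ∫ ω, (X ω + MX) ∂P = ∫ s, (P (A s)).toReal ∂ν₁ := by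
    have hint : Integrable (fun q : Ω × ℝ => if q.2 < X q.1 then (1:ℝ) else 0) (P.prod ν₁) := by
      apply (integrable_const (1 : ℝ)).mono'
      · exact (Measurable.ite
          (measurableSet_lt measurable_snd (hX'.comp measurable_fst))
          measurable_const measurable_const).aestronglyMeasurable
      · filter_upwards with q
        by_cases h : q.2 < X q.1 <;> simp [h]
    have hae : ∀ᵐ ω ∂P, X ω + MX = ∫ s, (if s < X ω then (1:ℝ) else 0) ∂ν₁ := by
      filter_upwards [hMX] with ω hx
      rw [layer MX (X ω) hx]
    rw [integral_congr_ae hae, integral_integral_swap hint]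
    exact integral_congr_ae (Filter.Eventually.of_forall fun s => hinnerX s)
  have step3 : ∫ ω, (Y ω + MY) ∂P = ∫ t, (P (B t)).toReal ∂ν₂ := by
    have hint : Integrable (fun q : Ω × ℝ => if q.2 < Y q.1 then (1:ℝ) else 0) (P.prod ν₂) := by
      apply (integrable_const (1 : ℝ)).mono'
      · exact (Measurable.ite
          (measurableSet_lt measurable_snd (hY'.comp measurable_fst))
          measurable_const measurable_const).aestronglyMeasurable
      · filter_upwards with q
        by_cases h : q.2 < Y q.1 <;> simp [h]
    have hae : ∀ᵐ ω ∂P, Y ω + MY = ∫ t, (if t < Y ω then (1:ℝ) else 0) ∂ν₂ := by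
      filter_upwards [hMY] with ω hy
      rw [layer MY (Y ω) hy]
    rw [integral_congr_ae hae, integral_integral_swap hint]
    exact integral_congr_ae (Filter.Eventually.of_forall fun t => hinnerY t)
  -- Step 4: product of expectations
  have step4 : (∫ ω, (X ω + MX) ∂P) * (∫ ω, (Y ω + MY) ∂P) = ∫ p, κ' p ∂(ν₁.prod ν₂) := by
    rw [step2, step3, ← integral_prod_mul]
  -- integrability for the final subtraction
  have hκint : Integrable κ (ν₁.prod ν₂) := by
    have := hHint.integral_prod_left
    refine this.congr (Filter.Eventually.of_forall fun p => ?_)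
    exact hinner p
  have hκ'int : Integrable κ' (ν₁.prod ν₂) := by
    have hiX : Integrable (fun s => (P (A s)).toReal) ν₁ := by
      have hint : Integrable (fun q : ℝ × Ω => if q.1 < X q.2 then (1:ℝ) else 0) (ν₁.prod P) := by
        apply (integrable_const (1 : ℝ)).mono'
        · exact (Measurable.ite
            (measurableSet_lt measurable_fst (hX'.comp measurable_snd))
            measurable_const measurable_const).aestronglyMeasurable
        · filter_upwards with q
          by_cases h : q.1 < X q.2 <;> simp [h]
      exact hint.integral_prod_left.congr
        (Filter.Eventually.of_forall fun s => hinnerX s)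
    have hiY : Integrable (fun t => (P (B t)).toReal) ν₂ := by
      have hint : Integrable (fun q : ℝ × Ω => if q.1 < Y q.2 then (1:ℝ) else 0) (ν₂.prod P) := by
        apply (integrable_const (1 : ℝ)).mono'
        · exact (Measurable.ite
            (measurableSet_lt measurable_fst (hY'.comp measurable_snd))
            measurable_const measurable_const).aestronglyMeasurable
        · filter_upwards with q
          by_cases h : q.1 < Y q.2 <;> simp [h]
      exact hint.integral_prod_left.congr
        (Filter.Eventually.of_forall fun t => hinnerY t)
    exact hiX.mul_prod hiY
  -- integrability of X, Y, XY under P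
  have hXint : Integrable X P :=
    (integrable_const MX).mono' hX'.aestronglyMeasurable
      (hMX.mono fun ω h => by simpa using h)
  have hYint : Integrable Y P :=
    (integrable_const MY).mono' hY'.aestronglyMeasurable
      (hMY.mono fun ω h => by simpa using h)
  have hXYint : Integrable (fun ω => X ω * Y ω) P := by
    apply (integrable_const (MX * MY)).mono' (hX'.mul hY').aestronglyMeasurable
    filter_upwards [hMX, hMY] with ω hx hy
    rw [Real.norm_eq_abs, Pi.mul_apply, abs_mul]
    exact mul_le_mul hx hy (abs_nonneg _) hMX0
  -- covariance shift identity
  have shift : (∫ ω, X ω * Y ω ∂P) - (∫ ω, X ω ∂P) * ∫ ω, Y ω ∂P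
      = (∫ ω, (X ω + MX) * (Y ω + MY) ∂P)
        - (∫ ω, (X ω + MX) ∂P) * ∫ ω, (Y ω + MY) ∂P := by
    have e1 : ∫ ω, (X ω + MX) * (Y ω + MY) ∂P
        = (∫ ω, X ω * Y ω ∂P) + MX * (∫ ω, Y ω ∂P) + MY * (∫ ω, X ω ∂P) + MX * MY := by
      have : (fun ω => (X ω + MX) * (Y ω + MY))
          = fun ω => X ω * Y ω + MX * Y ω + MY * X ω + MX * MY := by
        funext ω; ring
      rw [this]
      have i1 : Integrable (fun ω => X ω * Y ω + MX * Y ω) P :=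
        hXYint.add (hYint.const_mul MX)
      have i2 : Integrable (fun ω => X ω * Y ω + MX * Y ω + MY * X ω) P :=
        i1.add (hXint.const_mul MY)
      rw [integral_add i2 (integrable_const (MX * MY)), integral_add i1 (hXint.const_mul MY),
        integral_add hXYint (hYint.const_mul MX),
        MeasureTheory.integral_const_mul, MeasureTheory.integral_const_mul]
      simp
    have e2 : ∫ ω, (X ω + MX) ∂P = (∫ ω, X ω ∂P) + MX := by
      rw [integral_add hXint (integrable_const _)]
      simp
    have e3 : ∫ ω, (Y ω + MY) ∂P = (∫ ω, Y ω ∂P) + MY := by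
      rw [integral_add hYint (integrable_const _)]
      simp
    rw [e1, e2, e3]
    ring
  rw [shift, step1, step4, ← integral_sub hκint hκ'int]
  -- final estimate
  have hbound : |∫ p, (κ p - κ' p) ∂(ν₁.prod ν₂)| ≤ ∫ p, φ ∂(ν₁.prod ν₂) := by
    calc |∫ p, (κ p - κ' p) ∂(ν₁.prod ν₂)| ≤ ∫ p, |κ p - κ' p| ∂(ν₁.prod ν₂) := by
          simpa [Real.norm_eq_abs] using
            norm_integral_le_integral_norm (fun p => κ p - κ' p) (μ := ν₁.prod ν₂)
      _ ≤ ∫ p, φ ∂(ν₁.prod ν₂) := by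
          apply integral_mono (hκint.sub hκ'int).abs (integrable_const φ)
          intro p
          exact hmix' p.1 p.2
  have htotal : ∫ p, φ ∂(ν₁.prod ν₂) = (2 * MX) * (2 * MY) * φ := by
    rw [integral_const, smul_eq_mul]
    congr 1
    rw [measureReal_def, Measure.prod_apply MeasurableSet.univ]
    simp only [Set.preimage_univ]
    rw [lintegral_const, Measure.restrict_apply_univ, Measure.restrict_apply_univ,
      Real.volume_Ioc, Real.volume_Ioc, ← ENNReal.ofReal_mul (by linarith)]
    rw [ENNReal.toReal_ofReal (by nlinarith)]
    ring
  calc |∫ p, (κ p - κ' p) ∂(ν₁.prod ν₂)| ≤ (2 * MX) * (2 * MY) * φ := htotal ▸ hbound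
    _ = 4 * MX * MY * φ := by ring
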